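/- Let p = N(0, I_d) be the standard Gaussian on ℝ^d (whose score is ∇ log p(x) = −x) and let p* = N(0, σ² I_d) with σ² = 6/11. For every k > 1 there exists a constant c > 0 depending only on k such that for every d ≥ 1 and every ε ∈ (0,1) there exists a measurable function ŝ : ℝ^d → ℝ^d with E_{x∼p}[ ‖ŝ(x) − ∇ log p(x)‖^k ] ≤ ε^k, and yet P_{x∼p*}[ ‖ŝ(x) − ∇ log p(x)‖ ≥ e^{c·d}·ε ] ≥ 1 − 2·e^{−c·d}. -/

import Mathlib

open MeasureTheory
open scoped ENNReal

/-- The density of the isotropic Gaussian `N(0, σ² I_d)` on `ℝ^d`. -/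
noncomputable def gaussDensity (d : ℕ) (σ2 : ℝ) (x : EuclideanSpace ℝ (Fin d)) : ℝ :=
  (2 * Real.pi * σ2) ^ (-(d : ℝ) / 2) * Real.exp (-‖x‖ ^ 2 / (2 * σ2))

/-- The isotropic Gaussian measure `N(0, σ² I_d)` on `ℝ^d`. -/
noncomputable def gaussMeasure (d : ℕ) (σ2 : ℝ) : Measure (EuclideanSpace ℝ (Fin d)) :=
  volume.withDensity fun x => ENNReal.ofReal (gaussDensity d σ2 x)

lemma integrable_rexp_neg_mul_sq_norm' {d : ℕ} {b : ℝ} (hb : 0 < b) :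
    Integrable (fun x : EuclideanSpace ℝ (Fin d) => Real.exp (-b * ‖x‖ ^ 2)) := by
  have h := (GaussianFourier.integrable_cexp_neg_mul_sq_norm_add
      (V := EuclideanSpace ℝ (Fin d)) (b := (b : ℂ)) (by simpa using hb) 0 0).norm
  have : (fun v : EuclideanSpace ℝ (Fin d) =>
      ‖Complex.exp (-(b : ℂ) * (‖v‖ : ℂ) ^ 2 + 0 * (inner ℝ (0 : EuclideanSpace ℝ (Fin d)) v : ℝ))‖)
      = fun v : EuclideanSpace ℝ (Fin d) => Real.exp (-b * ‖v‖ ^ 2) := by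
    funext v
    rw [Complex.norm_exp]
    have hz : -(b:ℂ) * (‖v‖ : ℂ) ^ 2 + 0 * ((inner ℝ (0 : EuclideanSpace ℝ (Fin d)) v : ℝ) : ℂ)
        = ((-b * ‖v‖ ^ 2 : ℝ) : ℂ) := by push_cast; ring
    rw [hz, Complex.ofReal_re]
  rwa [this] at h

/-- The Gaussian MGF-type integral. -/
lemma gauss_mgf (d : ℕ) {σ2 : ℝ} (l : ℝ) (hσ : 0 < σ2) (hl : 0 < 1 + 2 * l * σ2) :
    ∫⁻ x : EuclideanSpace ℝ (Fin d),
        ENNReal.ofReal (Real.exp (-l * ‖x‖ ^ 2) * gaussDensity d σ2 x)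
      = ENNReal.ofReal ((1 + 2 * l * σ2) ^ (-(d : ℝ) / 2)) := by
  have hσ' : σ2 ≠ 0 := ne_of_gt hσ
  set b : ℝ := l + 1 / (2 * σ2) with hbdef
  have hb : 0 < b := by
    have : b = (1 + 2 * l * σ2) / (2 * σ2) := by rw [hbdef]; field_simp; ring
    rw [this]; positivity
  have hpi : (0:ℝ) < Real.pi := Real.pi_pos
  have hrw : ∀ x : EuclideanSpace ℝ (Fin d),
      Real.exp (-l * ‖x‖ ^ 2) * gaussDensity d σ2 x
        = (2 * Real.pi * σ2) ^ (-(d : ℝ) / 2) * Real.exp (-b * ‖x‖ ^ 2) := by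
    intro x
    rw [gaussDensity, mul_left_comm, ← Real.exp_add]
    congr 2
    rw [hbdef]
    field_simp [hbdef]
    ring
  simp_rw [hrw]
  have hint : Integrable
      (fun x : EuclideanSpace ℝ (Fin d) =>
        (2 * Real.pi * σ2) ^ (-(d : ℝ) / 2) * Real.exp (-b * ‖x‖ ^ 2)) :=
    (integrable_rexp_neg_mul_sq_norm' hb).const_mul _
  rw [← MeasureTheory.ofReal_integral_eq_lintegral_ofReal hint
      (Filter.Eventually.of_forall fun x => by positivity)]
  rw [integral_const_mul, GaussianFourier.integral_rexp_neg_mul_sq_norm hb]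
  congr 1
  have hfr : (Module.finrank ℝ (EuclideanSpace ℝ (Fin d)) : ℝ) = (d : ℝ) := by
    simp [finrank_euclideanSpace]
  rw [hfr]
  -- algebra: (2πσ2)^(-d/2) * (π/b)^(d/2) = (1+2lσ2)^(-d/2)
  have h1 : 1 + 2 * l * σ2 = (2 * Real.pi * σ2) / (Real.pi / b) := by
    rw [hbdef]; field_simp; ring
  have e2 : -(d : ℝ) / 2 = -((d : ℝ) / 2) := by ring
  rw [h1, Real.div_rpow (by positivity) (by positivity), e2]
  have p1 : 0 < (2 * Real.pi * σ2) ^ ((d:ℝ)/2) := Real.rpow_pos_of_pos (by positivity) _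
  have p2 : 0 < Real.pi ^ ((d:ℝ)/2) := Real.rpow_pos_of_pos hpi _
  have p3 : 0 < b ^ ((d:ℝ)/2) := Real.rpow_pos_of_pos hb _
  have hR : (2 * Real.pi * σ2 / (Real.pi / b)) ^ (-((d:ℝ) / 2)) =
      (2 * Real.pi * σ2) ^ (-((d:ℝ)/2)) * (Real.pi ^ ((d:ℝ)/2) / b ^ ((d:ℝ)/2)) := by
    rw [Real.rpow_neg (div_nonneg (by positivity) (div_nonneg hpi.le hb.le)),
      Real.rpow_neg (by positivity),
      Real.div_rpow (by positivity) (div_nonneg hpi.le hb.le),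
      Real.div_rpow hpi.le hb.le]
    field_simp
  rw [hR]

/-- Chernoff-type bound for the Gaussian measure. -/
lemma gauss_chernoff (d : ℕ) {σ2 : ℝ} (l a : ℝ) (hσ : 0 < σ2) (hl : 0 < 1 + 2 * l * σ2)
    {S : Set (EuclideanSpace ℝ (Fin d))} (hSm : MeasurableSet S)
    (hS : ∀ x ∈ S, l * ‖x‖ ^ 2 ≤ a) :
    gaussMeasure d σ2 S
      ≤ ENNReal.ofReal (Real.exp a * (1 + 2 * l * σ2) ^ (-(d : ℝ) / 2)) := by
  have hdens : ∀ x : EuclideanSpace ℝ (Fin d), 0 ≤ gaussDensity d σ2 x := by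
    intro x; rw [gaussDensity]; positivity
  rw [gaussMeasure, withDensity_apply _ hSm, ← lintegral_indicator hSm]
  have hmono : ∀ x : EuclideanSpace ℝ (Fin d),
      S.indicator (fun x => ENNReal.ofReal (gaussDensity d σ2 x)) x
        ≤ ENNReal.ofReal (Real.exp a *
            (Real.exp (-l * ‖x‖ ^ 2) * gaussDensity d σ2 x)) := by
    intro x
    by_cases hx : x ∈ S
    · rw [Set.indicator_of_mem hx]
      apply ENNReal.ofReal_le_ofReal
      rw [← mul_assoc, ← Real.exp_add]
      calc gaussDensity d σ2 x = 1 * gaussDensity d σ2 x := (one_mul _).symm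
        _ ≤ Real.exp (a + -l * ‖x‖ ^ 2) * gaussDensity d σ2 x := by
            apply mul_le_mul_of_nonneg_right _ (hdens x)
            apply Real.one_le_exp
            have := hS x hx
            linarith
    · rw [Set.indicator_of_notMem hx]
      exact zero_le (a := _)
  calc ∫⁻ x, S.indicator (fun x => ENNReal.ofReal (gaussDensity d σ2 x)) x
      ≤ ∫⁻ x, ENNReal.ofReal (Real.exp a *
          (Real.exp (-l * ‖x‖ ^ 2) * gaussDensity d σ2 x)) := lintegral_mono hmono
    _ = ENNReal.ofReal (Real.exp a) *
          ∫⁻ x, ENNReal.ofReal (Real.exp (-l * ‖x‖ ^ 2) * gaussDensity d σ2 x) := by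
        simp_rw [ENNReal.ofReal_mul (Real.exp_nonneg a)]
        rw [lintegral_const_mul' _ _ ENNReal.ofReal_ne_top]
    _ = ENNReal.ofReal (Real.exp a * (1 + 2 * l * σ2) ^ (-(d : ℝ) / 2)) := by
        rw [gauss_mgf d l hσ hl, ← ENNReal.ofReal_mul (Real.exp_nonneg a)]

/-- The Gaussian measure is a probability measure. -/
lemma gauss_total (d : ℕ) {σ2 : ℝ} (hσ : 0 < σ2) :
    gaussMeasure d σ2 Set.univ = 1 := by
  rw [gaussMeasure, withDensity_apply _ MeasurableSet.univ, Measure.restrict_univ]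
  have h := gauss_mgf d 0 hσ (by norm_num)
  simpa using h

/-- Let `p = N(0, I_d)` (score `−x`) and `p* = N(0, (6/11) I_d)`.
For every `k > 1` there is `c > 0` (depending only on `k`) such that for every `d ≥ 1`
and `ε ∈ (0,1)` there is a measurable `ŝ` with `E_{x∼p}‖ŝ(x) − (−x)‖^k ≤ ε^k` yet
`P_{x∼p*}[‖ŝ(x) − (−x)‖ ≥ e^{cd} ε] ≥ 1 − 2e^{−cd}`. -/
theorem lp_score_error_amplification (k : ℝ) (hk : 1 < k) :
    ∃ c > (0 : ℝ), ∀ d : ℕ, 1 ≤ d → ∀ ε : ℝ, ε ∈ Set.Ioo (0 : ℝ) 1 →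
      ∃ shat : EuclideanSpace ℝ (Fin d) → EuclideanSpace ℝ (Fin d),
        Measurable shat ∧
        (∫ x, ‖shat x - (-x)‖ ^ k ∂gaussMeasure d 1) ≤ ε ^ k ∧
        ENNReal.ofReal (1 - 2 * Real.exp (-c * d)) ≤
          gaussMeasure d (6 / 11) {x | Real.exp (c * d) * ε ≤ ‖shat x - (-x)‖} := by
  have hk0 : (0:ℝ) < k := lt_trans one_pos hk
  set c : ℝ := 1 / (112 * k) with hcdef
  have hc : 0 < c := by positivity
  have hck : c * k = 1 / 112 := by rw [hcdef]; field_simp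
  have hcle : c ≤ 1 / 112 := by
    rw [hcdef]
    rw [div_le_div_iff₀ (by positivity) (by norm_num)]
    nlinarith
  -- two logarithm bounds
  have hlog76 : (1:ℝ) / 7 ≤ Real.log (7 / 6) := by
    have h := Real.log_le_sub_one_of_pos (show (0:ℝ) < 6/7 by norm_num)
    have h2 : Real.log ((7:ℝ)/6) = - Real.log (6/7) := by
      rw [← Real.log_inv]; norm_num
    rw [h2]; linarith
  have hlog118 : Real.log ((11:ℝ) / 8) ≤ 1 / 3 := by
    rw [Real.log_le_iff_le_exp (by norm_num)]
    have h3 : ((11:ℝ)/8) ^ (3:ℕ) ≤ Real.exp (1/3) ^ (3:ℕ) := by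
      rw [← Real.exp_nat_mul]
      norm_num
      calc ((1331:ℝ)/512) ≤ 2.7182818283 := by norm_num
        _ ≤ Real.exp 1 := le_of_lt Real.exp_one_gt_d9
    exact le_of_pow_le_pow_left₀ (by norm_num) (Real.exp_pos _).le h3
  refine ⟨c, hc, ?_⟩
  intro d hd ε hε
  obtain ⟨hε0, hε1⟩ := hε
  have hd0 : (0:ℝ) < (d:ℝ) := by exact_mod_cast hd
  set M : ℝ := Real.exp (c * d) with hMdef
  have hM : 0 < M := Real.exp_pos _
  have hMε : 0 < M * ε := mul_pos hM hε0
  set u : EuclideanSpace ℝ (Fin d) := EuclideanSpace.single ⟨0, hd⟩ (1:ℝ) with hudef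
  have hu : ‖u‖ = 1 := by rw [hudef, EuclideanSpace.norm_single]; norm_num
  set A : Set (EuclideanSpace ℝ (Fin d)) := {x | ‖x‖ ^ 2 ≤ 3 * d / 4} with hAdef
  have hAm : MeasurableSet A := by
    apply measurableSet_le _ measurable_const
    exact (continuous_norm.pow 2).measurable
  set shat : EuclideanSpace ℝ (Fin d) → EuclideanSpace ℝ (Fin d) :=
    fun x => -x + A.indicator (fun _ => (M * ε) • u) x with hshat
  have hmeas : Measurable shat :=
    measurable_neg.add (measurable_const.indicator hAm)
  have hnorm : ∀ x, ‖shat x - (-x)‖ = A.indicator (fun _ => M * ε) x := by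
    intro x
    have : shat x - (-x) = A.indicator (fun _ => (M * ε) • u) x := by
      simp only [hshat]; abel
    rw [this]
    by_cases hx : x ∈ A
    · rw [Set.indicator_of_mem hx, Set.indicator_of_mem hx, norm_smul, hu]
      rw [Real.norm_eq_abs, abs_of_pos hMε, mul_one]
    · rw [Set.indicator_of_notMem hx, Set.indicator_of_notMem hx, norm_zero]
  refine ⟨shat, hmeas, ?_, ?_⟩
  · -- L^k bound under N(0, I)
    have hAbound : gaussMeasure d 1 A
        ≤ ENNReal.ofReal (Real.exp ((d:ℝ)/16) * (7/6 : ℝ) ^ (-(d:ℝ)/2)) := by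
      have h := gauss_chernoff d (σ2 := 1) (1/12) ((d:ℝ)/16) one_pos (by norm_num) hAm
        (fun x hx => by
          have : ‖x‖ ^ 2 ≤ 3 * d / 4 := hx
          linarith)
      convert h using 3
      norm_num
    have hintg : ∀ x, ‖shat x - (-x)‖ ^ k = A.indicator (fun _ => (M * ε) ^ k) x := by
      intro x
      rw [hnorm x]
      by_cases hx : x ∈ A
      · rw [Set.indicator_of_mem hx, Set.indicator_of_mem hx]
      · rw [Set.indicator_of_notMem hx, Set.indicator_of_notMem hx,
          Real.zero_rpow (ne_of_gt hk0)]
    simp_rw [hintg]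
    rw [MeasureTheory.integral_indicator_const _ hAm]
    have hB0 : (0:ℝ) ≤ Real.exp ((d:ℝ)/16) * (7/6 : ℝ) ^ (-(d:ℝ)/2) := by positivity
    have htoReal : (gaussMeasure d 1 A).toReal
        ≤ Real.exp ((d:ℝ)/16) * (7/6 : ℝ) ^ (-(d:ℝ)/2) :=
      ENNReal.toReal_le_of_le_ofReal hB0 hAbound
    have hMk : (M * ε) ^ k = M ^ k * ε ^ k := Real.mul_rpow hM.le hε0.le
    have hMke : M ^ k = Real.exp (c * d * k) := by
      rw [hMdef, ← Real.exp_mul]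
    have hrpow : (7/6 : ℝ) ^ (-(d:ℝ)/2) = Real.exp (Real.log (7/6) * (-(d:ℝ)/2)) := by
      rw [← Real.rpow_def_of_pos (by norm_num)]
    have hkey : Real.exp ((d:ℝ)/16) * (7/6 : ℝ) ^ (-(d:ℝ)/2) * Real.exp (c * d * k) ≤ 1 := by
      rw [hrpow, ← Real.exp_add, ← Real.exp_add, ← Real.exp_zero]
      apply Real.exp_le_exp.mpr
      have hcdk : c * d * k = (d:ℝ) / 112 := by
        rw [mul_comm c (d:ℝ), mul_assoc, hck]; ring
      rw [hcdk]
      nlinarith [mul_nonneg hd0.le (sub_nonneg.mpr hlog76)]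
    have hεk : (0:ℝ) < ε ^ k := Real.rpow_pos_of_pos hε0 k
    calc (gaussMeasure d 1 A).toReal • (M * ε) ^ k
        = (gaussMeasure d 1 A).toReal * (M ^ k * ε ^ k) := by rw [smul_eq_mul, hMk]
      _ ≤ (Real.exp ((d:ℝ)/16) * (7/6 : ℝ) ^ (-(d:ℝ)/2)) * (M ^ k * ε ^ k) := by
          apply mul_le_mul_of_nonneg_right htoReal
          positivity
      _ = (Real.exp ((d:ℝ)/16) * (7/6 : ℝ) ^ (-(d:ℝ)/2) * Real.exp (c * d * k)) * ε ^ k := by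
          rw [hMke]; ring
      _ ≤ 1 * ε ^ k := mul_le_mul_of_nonneg_right hkey hεk.le
      _ = ε ^ k := one_mul _
  · -- probability bound under N(0, 6/11 I)
    have hAcbound : gaussMeasure d (6/11) Aᶜ ≤ ENNReal.ofReal (Real.exp (-c * d)) := by
      have h := gauss_chernoff d (σ2 := 6/11) (-(1/4)) (-(3 * (d:ℝ)/16)) (by norm_num)
        (by norm_num) hAm.compl
        (fun x hx => by
          have hx' : ¬ (‖x‖ ^ 2 ≤ 3 * d / 4) := hx
          push_neg at hx'
          nlinarith)
      have harith : (1 : ℝ) + 2 * (-(1/4)) * (6/11) = 8/11 := by norm_num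
      rw [harith] at h
      refine le_trans h (ENNReal.ofReal_le_ofReal ?_)
      have hrpow : ((8:ℝ)/11) ^ (-(d:ℝ)/2) = Real.exp (Real.log (8/11) * (-(d:ℝ)/2)) := by
        rw [← Real.rpow_def_of_pos (by norm_num)]
      rw [hrpow, ← Real.exp_add]
      apply Real.exp_le_exp.mpr
      have hloginv : Real.log ((8:ℝ)/11) = - Real.log (11/8) := by
        rw [← Real.log_inv]; norm_num
      rw [hloginv]
      have h118 : Real.log ((11:ℝ)/8) ≤ 1/3 := hlog118
      have hlogpos : 0 ≤ Real.log ((11:ℝ)/8) := Real.log_nonneg (by norm_num)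
      nlinarith [mul_nonneg hd0.le (sub_nonneg.mpr h118)]
    have hsub : A ⊆ {x | Real.exp (c * d) * ε ≤ ‖shat x - (-x)‖} := by
      intro x hx
      show Real.exp (c * d) * ε ≤ ‖shat x - (-x)‖
      rw [hnorm x, Set.indicator_of_mem hx]
    have htot : gaussMeasure d (6/11) Set.univ = 1 := gauss_total d (by norm_num)
    have hunion : gaussMeasure d (6/11) Set.univ
        ≤ gaussMeasure d (6/11) A + gaussMeasure d (6/11) Aᶜ := by
      rw [← Set.union_compl_self A]
      exact measure_union_le _ _
    have hA_lb : (1 : ℝ≥0∞) - ENNReal.ofReal (Real.exp (-c * d)) ≤ gaussMeasure d (6/11) A := by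
      rw [← htot]
      apply tsub_le_iff_right.mpr
      calc gaussMeasure d (6/11) Set.univ
          ≤ gaussMeasure d (6/11) A + gaussMeasure d (6/11) Aᶜ := hunion
        _ ≤ gaussMeasure d (6/11) A + ENNReal.ofReal (Real.exp (-c * d)) :=
            add_le_add_right hAcbound _
    calc ENNReal.ofReal (1 - 2 * Real.exp (-c * d))
        ≤ ENNReal.ofReal (1 - Real.exp (-c * d)) := by
          apply ENNReal.ofReal_le_ofReal
          have := Real.exp_pos (-c * d)
          linarith
      _ = ENNReal.ofReal 1 - ENNReal.ofReal (Real.exp (-c * d)) :=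
          ENNReal.ofReal_sub _ (Real.exp_pos _).le
      _ = (1 : ℝ≥0∞) - ENNReal.ofReal (Real.exp (-c * d)) := by rw [ENNReal.ofReal_one]
      _ ≤ gaussMeasure d (6/11) A := hA_lb
      _ ≤ gaussMeasure d (6/11) {x | Real.exp (c * d) * ε ≤ ‖shat x - (-x)‖} :=
          measure_mono hsub
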